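/- Asymptotic factorization of ξ: the difference ξ(√(x·(x + 1/2))) − √(ξ(x)·ξ(x + 1/2)) is O(x⁻³) as x → ∞; explicitly, the function x ↦ √(x² + x/2 + 1/16) − ((x² + 1/16)·((x + 1/2)² + 1/16))^(1/4) is big-O of x ↦ x⁻³ along the filter atTop on ℝ. -/
import Mathlib


/-- ξ(y) = √(y² + 1/16). -/
noncomputable def xi (y : ℝ) : ℝ := Real.sqrt (y ^ 2 + 1 / 16)

lemma xi_aux_alg (x A B sA sB ssB : ℝ) (hx : 1 ≤ x)
    (hxsA : x ≤ sA) (hx2A : x ^ 2 ≤ A) (hAsB : A ≤ sB) (hsAss : sA ≤ ssB)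
    (hsA2 : sA ^ 2 = A) (hsB2 : sB ^ 2 = B) (hss2 : ssB ^ 2 = sB)
    (hkey : B - A ^ 2 = 1 / 64) : ssB - sA ≤ 1 / x ^ 3 := by
  have hx0 : (0:ℝ) < x := lt_of_lt_of_le one_pos hx
  have hprod : (ssB - sA) * ((ssB + sA) * (sB + A)) = 1 / 64 := by
    have h : (ssB - sA) * ((ssB + sA) * (sB + A)) = B - A ^ 2 := by
      linear_combination (sB + A) * hss2 - (sB + A) * hsA2 + hsB2
    rw [h, hkey]
  have hD : x ^ 3 ≤ (ssB + sA) * (sB + A) := by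
    have h1 : x + 0 ≤ ssB + sA := add_le_add (le_trans hxsA hsAss) (by linarith)
    have h2 : x ^ 2 + 0 ≤ sB + A := add_le_add (le_trans hx2A hAsB)
      (by nlinarith [sq_nonneg x])
    calc x ^ 3 = x * x ^ 2 := by ring
      _ ≤ (ssB + sA) * (sB + A) := by
          apply mul_le_mul (by linarith) (by linarith) (by positivity) (by linarith)
  rw [le_div_iff₀ (by positivity)]
  calc (ssB - sA) * x ^ 3 ≤ (ssB - sA) * ((ssB + sA) * (sB + A)) :=
        mul_le_mul_of_nonneg_left hD (by linarith)
    _ = 1 / 64 := hprod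
    _ ≤ 1 := by norm_num

/-- The asymptotic factorization ξ(√(x(x+1/2))) = √(ξ(x)·ξ(x+1/2)) + O(x⁻³) as x → ∞. -/
theorem xi_factorization_isBigO :
    Asymptotics.IsBigO Filter.atTop
      (fun x : ℝ => xi (Real.sqrt (x * (x + 1/2))) - Real.sqrt (xi x * xi (x + 1/2)))
      (fun x : ℝ => 1 / x ^ 3) := by
  rw [Asymptotics.isBigO_iff]
  refine ⟨1, Filter.eventually_atTop.2 ⟨1, fun x hx => ?_⟩⟩
  have hx0 : (0:ℝ) < x := lt_of_lt_of_le one_pos hx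
  have hA0 : (0:ℝ) < x ^ 2 + x / 2 + 1 / 16 := by nlinarith
  have hB0 : (0:ℝ) < (x ^ 2 + 1 / 16) * ((x + 1 / 2) ^ 2 + 1 / 16) := by positivity
  have hkey : (x ^ 2 + 1 / 16) * ((x + 1 / 2) ^ 2 + 1 / 16)
      - (x ^ 2 + x / 2 + 1 / 16) ^ 2 = 1 / 64 := by ring
  have h1 : xi (Real.sqrt (x * (x + 1/2))) = Real.sqrt (x ^ 2 + x / 2 + 1 / 16) := by
    unfold xi
    rw [Real.sq_sqrt (by nlinarith : (0:ℝ) ≤ x * (x + 1/2))]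
    congr 1; ring
  have h2 : xi x * xi (x + 1/2) =
      Real.sqrt ((x ^ 2 + 1 / 16) * ((x + 1 / 2) ^ 2 + 1 / 16)) := by
    unfold xi
    rw [← Real.sqrt_mul (by positivity)]
  have hsA2 : (Real.sqrt (x ^ 2 + x / 2 + 1 / 16)) ^ 2 = x ^ 2 + x / 2 + 1 / 16 :=
    Real.sq_sqrt hA0.le
  have hsB2 : (Real.sqrt ((x ^ 2 + 1 / 16) * ((x + 1 / 2) ^ 2 + 1 / 16))) ^ 2
      = (x ^ 2 + 1 / 16) * ((x + 1 / 2) ^ 2 + 1 / 16) := Real.sq_sqrt hB0.le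
  have hss2 : (Real.sqrt (Real.sqrt ((x ^ 2 + 1 / 16) * ((x + 1 / 2) ^ 2 + 1 / 16)))) ^ 2
      = Real.sqrt ((x ^ 2 + 1 / 16) * ((x + 1 / 2) ^ 2 + 1 / 16)) :=
    Real.sq_sqrt (Real.sqrt_nonneg _)
  have hxsA : x ≤ Real.sqrt (x ^ 2 + x / 2 + 1 / 16) :=
    Real.le_sqrt_of_sq_le (by nlinarith)
  have hx2A : x ^ 2 ≤ x ^ 2 + x / 2 + 1 / 16 := by nlinarith
  have hAsB : x ^ 2 + x / 2 + 1 / 16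
      ≤ Real.sqrt ((x ^ 2 + 1 / 16) * ((x + 1 / 2) ^ 2 + 1 / 16)) :=
    Real.le_sqrt_of_sq_le (by nlinarith)
  have hsAss : Real.sqrt (x ^ 2 + x / 2 + 1 / 16)
      ≤ Real.sqrt (Real.sqrt ((x ^ 2 + 1 / 16) * ((x + 1 / 2) ^ 2 + 1 / 16))) :=
    Real.le_sqrt_of_sq_le (by rw [hsA2]; exact hAsB)
  have hbound := xi_aux_alg x (x ^ 2 + x / 2 + 1 / 16)
    ((x ^ 2 + 1 / 16) * ((x + 1 / 2) ^ 2 + 1 / 16))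
    (Real.sqrt (x ^ 2 + x / 2 + 1 / 16))
    (Real.sqrt ((x ^ 2 + 1 / 16) * ((x + 1 / 2) ^ 2 + 1 / 16)))
    (Real.sqrt (Real.sqrt ((x ^ 2 + 1 / 16) * ((x + 1 / 2) ^ 2 + 1 / 16))))
    hx hxsA hx2A hAsB hsAss hsA2 hsB2 hss2 hkey
  show ‖xi (Real.sqrt (x * (x + 1/2))) - Real.sqrt (xi x * xi (x + 1/2))‖ ≤ 1 * ‖1 / x ^ 3‖
  rw [h1, h2, Real.norm_eq_abs, Real.norm_eq_abs, abs_sub_comm,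
    abs_of_nonneg (by linarith), abs_of_pos (by positivity), one_mul]
  exact hbound
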